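/- Lower bound for the inner-iteration rotational gradient (equation (B.6)): Let H be an n×n real symmetric matrix with σ_max(H) ≤ M, U an n×N real matrix with σ_max(U) ≤ α, and s > 0 with 4·s·α²·M < 2. Define Ũ⁽⁰⁾ = U and, for k ≥ 1, Ũ⁽ᵏ⁾ = (Iₙ + (s/2)·𝒜_{Ũ⁽ᵏ⁻¹⁾})⁻¹·U. Then for every p ≥ 0, ‖𝒜_{Ũ⁽ᵖ⁾}·Ũ⁽ᵖ⁾‖_F ≥ ((2 − 10·s·α²·M)/(2 − 4·s·α²·M))·‖𝒜_U·U‖_F. -/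

import Mathlib

open Matrix

noncomputable section

/-- The skew-symmetric commutator 𝒜_W = H·W·Wᵀ − W·Wᵀ·H. -/
def commA {n N : ℕ} (H : Matrix (Fin n) (Fin n) ℝ) (W : Matrix (Fin n) (Fin N) ℝ) :
    Matrix (Fin n) (Fin n) ℝ :=
  H * W * Wᵀ - W * Wᵀ * H

/-- Frobenius norm of a real matrix. -/
def frobNorm {m k : ℕ} (A : Matrix (Fin m) (Fin k) ℝ) : ℝ :=
  Real.sqrt (∑ i, ∑ j, (A i j) ^ 2)

/-- Largest singular value (ℓ²-operator norm) of a real matrix. -/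
def sigmaMax {m k : ℕ} (A : Matrix (Fin m) (Fin k) ℝ) : ℝ :=
  ‖LinearMap.toContinuousLinearMap (Matrix.toEuclideanLin A)‖

section Frob
attribute [local instance] Matrix.frobeniusNormedAddCommGroup Matrix.frobeniusNormedSpace

lemma frobNorm_eq {m k : ℕ} (A : Matrix (Fin m) (Fin k) ℝ) : frobNorm A = ‖A‖ := by
  rw [Matrix.frobenius_norm_def, frobNorm, Real.sqrt_eq_rpow]
  congr 1
  refine Finset.sum_congr rfl fun i _ => Finset.sum_congr rfl fun j _ => ?_
  rw [Real.norm_eq_abs, show (2:ℝ) = ((2:ℕ):ℝ) by norm_num, Real.rpow_natCast, sq_abs]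

lemma frobNorm_nonneg {m k : ℕ} (A : Matrix (Fin m) (Fin k) ℝ) : 0 ≤ frobNorm A :=
  Real.sqrt_nonneg _

lemma frobNorm_zero {m k : ℕ} : frobNorm (0 : Matrix (Fin m) (Fin k) ℝ) = 0 := by
  rw [frobNorm_eq]; exact norm_zero

lemma frobNorm_add_le {m k : ℕ} (A B : Matrix (Fin m) (Fin k) ℝ) :
    frobNorm (A + B) ≤ frobNorm A + frobNorm B := by
  simp only [frobNorm_eq]; exact norm_add_le _ _

lemma frobNorm_neg {m k : ℕ} (A : Matrix (Fin m) (Fin k) ℝ) : frobNorm (-A) = frobNorm A := by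
  simp only [frobNorm_eq]; exact norm_neg _

lemma frobNorm_smul {m k : ℕ} (c : ℝ) (A : Matrix (Fin m) (Fin k) ℝ) :
    frobNorm (c • A) = |c| * frobNorm A := by
  simp only [frobNorm_eq]; rw [norm_smul, Real.norm_eq_abs]

lemma frobNorm_transpose {m k : ℕ} (A : Matrix (Fin m) (Fin k) ℝ) :
    frobNorm Aᵀ = frobNorm A := by
  simp only [frobNorm_eq]; exact Matrix.frobenius_norm_transpose A

lemma frobNorm_sub_le {m k : ℕ} (A B : Matrix (Fin m) (Fin k) ℝ) :
    frobNorm (A - B) ≤ frobNorm A + frobNorm B := by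
  simp only [frobNorm_eq]; exact norm_sub_le _ _

lemma frobNorm_lower {m k : ℕ} (A B : Matrix (Fin m) (Fin k) ℝ) :
    frobNorm B - frobNorm (B - A) ≤ frobNorm A := by
  simp only [frobNorm_eq]
  have h : ‖B‖ ≤ ‖A‖ + ‖B - A‖ := by
    calc ‖B‖ = ‖A + (B - A)‖ := by rw [show A + (B - A) = B by abel]
      _ ≤ ‖A‖ + ‖B - A‖ := norm_add_le _ _
  linarith

end Frob

section Sigma
open scoped Matrix.Norms.L2Operator

lemma sigmaMax_eq {m k : ℕ} (A : Matrix (Fin m) (Fin k) ℝ) : sigmaMax A = ‖A‖ := rfl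

lemma sigmaMax_nonneg {m k : ℕ} (A : Matrix (Fin m) (Fin k) ℝ) : 0 ≤ sigmaMax A := by
  rw [sigmaMax_eq]; exact norm_nonneg _

lemma sigmaMax_mul_le {m k l : ℕ} (A : Matrix (Fin m) (Fin k) ℝ) (B : Matrix (Fin k) (Fin l) ℝ) :
    sigmaMax (A * B) ≤ sigmaMax A * sigmaMax B := by
  simp only [sigmaMax_eq]; exact Matrix.l2_opNorm_mul A B

lemma sigmaMax_transpose {m k : ℕ} (A : Matrix (Fin m) (Fin k) ℝ) :
    sigmaMax Aᵀ = sigmaMax A := by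
  have h : Aᵀ = Aᴴ := by ext i j; simp [Matrix.conjTranspose_apply]
  rw [h]; simp only [sigmaMax_eq]; exact Matrix.l2_opNorm_conjTranspose A

lemma sigmaMax_sub_le {m k : ℕ} (A B : Matrix (Fin m) (Fin k) ℝ) :
    sigmaMax (A - B) ≤ sigmaMax A + sigmaMax B := by
  simp only [sigmaMax_eq]; exact norm_sub_le _ _

lemma frobNorm_mul_le_left {m k l : ℕ} (A : Matrix (Fin m) (Fin k) ℝ)
    (B : Matrix (Fin k) (Fin l) ℝ) :
    frobNorm (A * B) ≤ sigmaMax A * frobNorm B := by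
  have key : ∀ j, ∑ i, ((A * B) i j) ^ 2 ≤ (sigmaMax A)^2 * ∑ i, (B i j) ^ 2 := by
    intro j
    set v : EuclideanSpace ℝ (Fin k) := (WithLp.equiv 2 _).symm (fun i => B i j) with hv
    have h1 : ‖(EuclideanSpace.equiv (Fin m) ℝ).symm (A *ᵥ v)‖ ≤ ‖A‖ * ‖v‖ :=
      Matrix.l2_opNorm_mulVec A v
    have hnv : ‖v‖ ^ 2 = ∑ i, (B i j) ^ 2 := by
      rw [EuclideanSpace.norm_eq, Real.sq_sqrt (by positivity)]
      refine Finset.sum_congr rfl fun i _ => ?_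
      simp [hv, Real.norm_eq_abs, sq_abs]
    have hlhs : ‖(EuclideanSpace.equiv (Fin m) ℝ).symm (A *ᵥ v)‖ ^ 2
        = ∑ i, ((A * B) i j) ^ 2 := by
      rw [EuclideanSpace.norm_eq, Real.sq_sqrt (by positivity)]
      refine Finset.sum_congr rfl fun i _ => ?_
      have : ((EuclideanSpace.equiv (Fin m) ℝ).symm (A *ᵥ v)) i = (A *ᵥ v) i := rfl
      rw [this, Real.norm_eq_abs, sq_abs]
      congr 1
    calc ∑ i, ((A * B) i j) ^ 2 = ‖(EuclideanSpace.equiv (Fin m) ℝ).symm (A *ᵥ v)‖ ^ 2 :=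
          hlhs.symm
      _ ≤ (‖A‖ * ‖v‖) ^ 2 := by
          apply sq_le_sq' _ h1
          nlinarith [norm_nonneg ((EuclideanSpace.equiv (Fin m) ℝ).symm (A *ᵥ v))]
      _ = (sigmaMax A)^2 * ∑ i, (B i j) ^ 2 := by
          rw [mul_pow, sigmaMax_eq, hnv]
  rw [frobNorm, frobNorm, Finset.sum_comm]
  have h2 : ∑ j, ∑ i, ((A * B) i j) ^ 2 ≤ (sigmaMax A)^2 * ∑ j, ∑ i, (B i j) ^ 2 := by
    rw [Finset.mul_sum]; exact Finset.sum_le_sum fun j _ => key j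
  calc Real.sqrt (∑ j, ∑ i, ((A * B) i j) ^ 2)
      ≤ Real.sqrt ((sigmaMax A)^2 * ∑ j, ∑ i, (B i j) ^ 2) := Real.sqrt_le_sqrt h2
    _ = sigmaMax A * Real.sqrt (∑ j, ∑ i, (B i j) ^ 2) := by
        rw [Real.sqrt_mul (by positivity), Real.sqrt_sq (sigmaMax_nonneg A)]
    _ = sigmaMax A * Real.sqrt (∑ i, ∑ j, (B i j) ^ 2) := by rw [Finset.sum_comm]

lemma frobNorm_mul_le_right {m k l : ℕ} (A : Matrix (Fin m) (Fin k) ℝ)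
    (B : Matrix (Fin k) (Fin l) ℝ) :
    frobNorm (A * B) ≤ frobNorm A * sigmaMax B := by
  calc frobNorm (A * B) = frobNorm ((A * B)ᵀ) := (frobNorm_transpose _).symm
    _ = frobNorm (Bᵀ * Aᵀ) := by rw [Matrix.transpose_mul]
    _ ≤ sigmaMax Bᵀ * frobNorm Aᵀ := frobNorm_mul_le_left _ _
    _ = frobNorm A * sigmaMax B := by rw [sigmaMax_transpose, frobNorm_transpose]; ring

end Sigma

section Skew
open scoped Matrix.Norms.L2Operator

lemma euclid_norm_sq {n : ℕ} (v : Fin n → ℝ) :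
    ‖(WithLp.equiv 2 (Fin n → ℝ)).symm v‖ ^ 2 = v ⬝ᵥ v := by
  rw [EuclideanSpace.norm_eq, Real.sq_sqrt (by positivity)]
  refine Finset.sum_congr rfl fun i _ => ?_
  simp [dotProduct, Real.norm_eq_abs, sq_abs, sq]

lemma skew_dot {n : ℕ} {S : Matrix (Fin n) (Fin n) ℝ} (hS : Sᵀ = -S) (x : Fin n → ℝ) :
    x ⬝ᵥ x ≤ ((1 + S) *ᵥ x) ⬝ᵥ ((1 + S) *ᵥ x) := by
  have hskew : x ⬝ᵥ (S *ᵥ x) = -((S *ᵥ x) ⬝ᵥ x) := by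
    rw [Matrix.dotProduct_mulVec, ← Matrix.mulVec_transpose, hS, Matrix.neg_mulVec,
      neg_dotProduct]
  have hx : (1 + S) *ᵥ x = x + S *ᵥ x := by
    rw [Matrix.add_mulVec, Matrix.one_mulVec]
  rw [hx]
  have expand : (x + S *ᵥ x) ⬝ᵥ (x + S *ᵥ x)
      = x ⬝ᵥ x + (x ⬝ᵥ (S *ᵥ x) + (S *ᵥ x) ⬝ᵥ x) + (S *ᵥ x) ⬝ᵥ (S *ᵥ x) := by
    simp [add_dotProduct, dotProduct_add]; ring
  rw [expand, hskew]
  have : 0 ≤ (S *ᵥ x) ⬝ᵥ (S *ᵥ x) :=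
    Finset.sum_nonneg fun i _ => mul_self_nonneg _
  linarith

lemma skew_isUnit {n : ℕ} {S : Matrix (Fin n) (Fin n) ℝ} (hS : Sᵀ = -S) :
    IsUnit (1 + S) := by
  rw [← Matrix.mulVec_injective_iff_isUnit]
  have : ∀ x, (1 + S) *ᵥ x = 0 → x = 0 := by
    intro x hx
    have h1 := skew_dot hS x
    rw [hx] at h1
    simp only [dotProduct_zero] at h1
    have h2 : x ⬝ᵥ x = 0 := le_antisymm h1 (Finset.sum_nonneg fun i _ => mul_self_nonneg _)
    exact dotProduct_self_eq_zero.mp h2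
  intro x y hxy
  have hsub : (1 + S) *ᵥ (x - y) = 0 := by
    rw [Matrix.mulVec_sub, hxy, sub_self]
  exact sub_eq_zero.mp (this _ hsub)

lemma skew_inv_sigmaMax_le_one {n : ℕ} {S : Matrix (Fin n) (Fin n) ℝ} (hS : Sᵀ = -S) :
    sigmaMax (1 + S)⁻¹ ≤ 1 := by
  have hu : IsUnit (1 + S) := skew_isUnit hS
  have hdet : IsUnit (1 + S).det := (Matrix.isUnit_iff_isUnit_det _).mp hu
  rw [sigmaMax]
  apply ContinuousLinearMap.opNorm_le_bound _ zero_le_one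
  intro y
  rw [one_mul]
  set x : Fin n → ℝ := (1 + S)⁻¹ *ᵥ (WithLp.equiv 2 (Fin n → ℝ) y) with hxdef
  have happ : (LinearMap.toContinuousLinearMap (Matrix.toEuclideanLin (1 + S)⁻¹)) y
      = (WithLp.equiv 2 (Fin n → ℝ)).symm x := by
    simp [Matrix.toEuclideanLin_apply, hxdef]
  have hTx : (1 + S) *ᵥ x = WithLp.equiv 2 (Fin n → ℝ) y := by
    rw [hxdef, Matrix.mulVec_mulVec, Matrix.mul_nonsing_inv _ hdet, Matrix.one_mulVec]
  have h1 : x ⬝ᵥ x ≤ (WithLp.equiv 2 (Fin n → ℝ) y) ⬝ᵥ (WithLp.equiv 2 (Fin n → ℝ) y) := by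
    have := skew_dot hS x
    rwa [hTx] at this
  have hy : ‖y‖ ^ 2 = (WithLp.equiv 2 (Fin n → ℝ) y) ⬝ᵥ (WithLp.equiv 2 (Fin n → ℝ) y) := by
    have := euclid_norm_sq (WithLp.equiv 2 (Fin n → ℝ) y)
    rwa [show (WithLp.equiv 2 (Fin n → ℝ)).symm (WithLp.equiv 2 (Fin n → ℝ) y) = y from
      (WithLp.equiv 2 (Fin n → ℝ)).symm_apply_apply y] at this
  have hxn : ‖(WithLp.equiv 2 (Fin n → ℝ)).symm x‖ ^ 2 = x ⬝ᵥ x := euclid_norm_sq x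
  rw [happ]
  have h2 : ‖(WithLp.equiv 2 (Fin n → ℝ)).symm x‖ ^ 2 ≤ ‖y‖ ^ 2 := by
    rw [hxn, hy]; exact h1
  nlinarith [norm_nonneg ((WithLp.equiv 2 (Fin n → ℝ)).symm x), norm_nonneg y, h2]

end Skew

section CommA

variable {n N : ℕ}

lemma commA_skew {H : Matrix (Fin n) (Fin n) ℝ} (hH : H.IsSymm)
    (W : Matrix (Fin n) (Fin N) ℝ) : (commA H W)ᵀ = -(commA H W) := by
  have hHs : Hᵀ = H := hH
  simp only [commA, Matrix.transpose_sub, Matrix.transpose_mul, Matrix.transpose_transpose, hHs]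
  rw [neg_sub]
  congr 1 <;> rw [Matrix.mul_assoc]

lemma smul_commA_skew {H : Matrix (Fin n) (Fin n) ℝ} (hH : H.IsSymm)
    (W : Matrix (Fin n) (Fin N) ℝ) (c : ℝ) : (c • commA H W)ᵀ = -(c • commA H W) := by
  rw [Matrix.transpose_smul, commA_skew hH, smul_neg]

lemma sigmaMax_commA_le {H : Matrix (Fin n) (Fin n) ℝ} {M α : ℝ}
    (hM : sigmaMax H ≤ M) {W : Matrix (Fin n) (Fin N) ℝ} (hW : sigmaMax W ≤ α) :
    sigmaMax (commA H W) ≤ 2 * M * α ^ 2 := by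
  have hM0 : 0 ≤ M := (sigmaMax_nonneg H).trans hM
  have hα0 : 0 ≤ α := (sigmaMax_nonneg W).trans hW
  have h1 : sigmaMax (H * W * Wᵀ) ≤ M * α ^ 2 := by
    calc sigmaMax (H * W * Wᵀ) ≤ sigmaMax (H * W) * sigmaMax Wᵀ := sigmaMax_mul_le _ _
      _ ≤ (sigmaMax H * sigmaMax W) * sigmaMax Wᵀ := by
          apply mul_le_mul_of_nonneg_right (sigmaMax_mul_le _ _) (sigmaMax_nonneg _)
      _ ≤ (M * α) * α := by
          rw [sigmaMax_transpose]
          apply mul_le_mul (mul_le_mul hM hW (sigmaMax_nonneg _) hM0) hW (sigmaMax_nonneg _)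
          positivity
      _ = M * α ^ 2 := by ring
  have h2 : sigmaMax (W * Wᵀ * H) ≤ M * α ^ 2 := by
    calc sigmaMax (W * Wᵀ * H) ≤ sigmaMax (W * Wᵀ) * sigmaMax H := sigmaMax_mul_le _ _
      _ ≤ (sigmaMax W * sigmaMax Wᵀ) * sigmaMax H := by
          apply mul_le_mul_of_nonneg_right (sigmaMax_mul_le _ _) (sigmaMax_nonneg _)
      _ ≤ (α * α) * M := by
          rw [sigmaMax_transpose]
          apply mul_le_mul (mul_le_mul hW hW (sigmaMax_nonneg _) hα0) hM (sigmaMax_nonneg _)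
          positivity
      _ = M * α ^ 2 := by ring
  calc sigmaMax (commA H W) ≤ sigmaMax (H * W * Wᵀ) + sigmaMax (W * Wᵀ * H) :=
        sigmaMax_sub_le _ _
    _ ≤ 2 * M * α ^ 2 := by linarith

/-- Generic bound: `frobNorm (P * (D * (Q * R))) ≤ σP · σQ · σR · frobNorm D`. -/
lemma frob_PDQR {a b c d e : ℕ} (P : Matrix (Fin a) (Fin b) ℝ) (D : Matrix (Fin b) (Fin c) ℝ)
    (Q : Matrix (Fin c) (Fin d) ℝ) (R : Matrix (Fin d) (Fin e) ℝ) :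
    frobNorm (P * (D * (Q * R))) ≤ sigmaMax P * (frobNorm D * (sigmaMax Q * sigmaMax R)) := by
  calc frobNorm (P * (D * (Q * R))) ≤ sigmaMax P * frobNorm (D * (Q * R)) :=
        frobNorm_mul_le_left _ _
    _ ≤ sigmaMax P * (frobNorm D * sigmaMax (Q * R)) := by
        apply mul_le_mul_of_nonneg_left (frobNorm_mul_le_right _ _) (sigmaMax_nonneg _)
    _ ≤ sigmaMax P * (frobNorm D * (sigmaMax Q * sigmaMax R)) := by
        apply mul_le_mul_of_nonneg_left _ (sigmaMax_nonneg _)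
        exact mul_le_mul_of_nonneg_left (sigmaMax_mul_le _ _) (frobNorm_nonneg _)

end CommA

section Expand

variable {n N : ℕ} (H : Matrix (Fin n) (Fin n) ℝ) (W U : Matrix (Fin n) (Fin N) ℝ)

lemma commA_diff_mul_expand :
    (commA H W - commA H U) * U =
      H * ((W - U) * (Wᵀ * U)) + H * (U * ((W - U)ᵀ * U))
        - (W - U) * (Wᵀ * (H * U)) - U * ((W - U)ᵀ * (H * U)) := by
  simp only [commA, Matrix.transpose_sub, Matrix.sub_mul, Matrix.mul_sub, Matrix.mul_assoc]
  abel

lemma commA_mul_diff_expand :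
    commA H W * W - commA H U * U =
      H * ((W - U) * (Wᵀ * W)) + H * (U * ((W - U)ᵀ * W)) + H * (U * (Uᵀ * (W - U)))
        - (W - U) * (Wᵀ * (H * W)) - U * ((W - U)ᵀ * (H * W)) - U * (Uᵀ * (H * (W - U))) := by
  simp only [commA, Matrix.transpose_sub, Matrix.sub_mul, Matrix.mul_sub, Matrix.mul_assoc]
  abel

end Expand

section KeyBounds

variable {n N : ℕ} {H : Matrix (Fin n) (Fin n) ℝ} {M α : ℝ}

lemma bdL {a b c : ℕ} {P : Matrix (Fin a) (Fin b) ℝ} {E : Matrix (Fin b) (Fin c) ℝ}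
    {p f : ℝ} (hP : sigmaMax P ≤ p) (hE : frobNorm E ≤ f) (hp : 0 ≤ p) :
    frobNorm (P * E) ≤ p * f :=
  (frobNorm_mul_le_left P E).trans (mul_le_mul hP hE (frobNorm_nonneg _) hp)

lemma bdR {a b c : ℕ} {E : Matrix (Fin a) (Fin b) ℝ} {X : Matrix (Fin b) (Fin c) ℝ}
    {f x : ℝ} (hE : frobNorm E ≤ f) (hX : sigmaMax X ≤ x) (hf : 0 ≤ f) :
    frobNorm (E * X) ≤ f * x :=
  (frobNorm_mul_le_right E X).trans (mul_le_mul hE hX (sigmaMax_nonneg _) hf)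

lemma bdS {a b c : ℕ} {P : Matrix (Fin a) (Fin b) ℝ} {X : Matrix (Fin b) (Fin c) ℝ}
    {p x : ℝ} (hP : sigmaMax P ≤ p) (hX : sigmaMax X ≤ x) (hp : 0 ≤ p) :
    sigmaMax (P * X) ≤ p * x :=
  (sigmaMax_mul_le P X).trans (mul_le_mul hP hX (sigmaMax_nonneg _) hp)

/-- `‖(𝒜_W − 𝒜_U)·U‖_F ≤ 4 M α² ‖W − U‖_F`. -/
lemma key4 (hM : sigmaMax H ≤ M) {W U : Matrix (Fin n) (Fin N) ℝ}
    (hW : sigmaMax W ≤ α) (hU : sigmaMax U ≤ α) :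
    frobNorm ((commA H W - commA H U) * U) ≤ 4 * M * α ^ 2 * frobNorm (W - U) := by
  have hM0 : 0 ≤ M := (sigmaMax_nonneg H).trans hM
  have hα0 : 0 ≤ α := (sigmaMax_nonneg U).trans hU
  set D := W - U with hD
  have hf0 : 0 ≤ frobNorm D := frobNorm_nonneg D
  have hWt : sigmaMax Wᵀ ≤ α := by rw [sigmaMax_transpose]; exact hW
  have hDtf : frobNorm Dᵀ ≤ frobNorm D := le_of_eq (frobNorm_transpose D)
  have hHU : sigmaMax (H * U) ≤ M * α := bdS hM hU hM0
  have t1 : frobNorm (H * (D * (Wᵀ * U))) ≤ M * (frobNorm D * (α * α)) :=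
    bdL hM (bdR le_rfl (bdS hWt hU hα0) hf0) hM0
  have t2 : frobNorm (H * (U * (Dᵀ * U))) ≤ M * (α * (frobNorm D * α)) :=
    bdL hM (bdL hU (bdR hDtf hU hf0) hα0) hM0
  have t3 : frobNorm (D * (Wᵀ * (H * U))) ≤ frobNorm D * (α * (M * α)) :=
    bdR le_rfl (bdS hWt hHU hα0) hf0
  have t4 : frobNorm (U * (Dᵀ * (H * U))) ≤ α * (frobNorm D * (M * α)) :=
    bdL hU (bdR hDtf hHU hf0) hα0
  have expand := commA_diff_mul_expand H W U
  rw [← hD] at expand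
  rw [expand]
  have tri : frobNorm (H * (D * (Wᵀ * U)) + H * (U * (Dᵀ * U))
        - D * (Wᵀ * (H * U)) - U * (Dᵀ * (H * U)))
      ≤ frobNorm (H * (D * (Wᵀ * U))) + frobNorm (H * (U * (Dᵀ * U)))
        + frobNorm (D * (Wᵀ * (H * U))) + frobNorm (U * (Dᵀ * (H * U))) := by
    calc frobNorm (H * (D * (Wᵀ * U)) + H * (U * (Dᵀ * U))
          - D * (Wᵀ * (H * U)) - U * (Dᵀ * (H * U)))
        ≤ frobNorm (H * (D * (Wᵀ * U)) + H * (U * (Dᵀ * U)) - D * (Wᵀ * (H * U)))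
          + frobNorm (U * (Dᵀ * (H * U))) := frobNorm_sub_le _ _
      _ ≤ frobNorm (H * (D * (Wᵀ * U)) + H * (U * (Dᵀ * U))) + frobNorm (D * (Wᵀ * (H * U)))
          + frobNorm (U * (Dᵀ * (H * U))) := by
            have := frobNorm_sub_le (H * (D * (Wᵀ * U)) + H * (U * (Dᵀ * U))) (D * (Wᵀ * (H * U)))
            linarith
      _ ≤ _ := by
            have := frobNorm_add_le (H * (D * (Wᵀ * U))) (H * (U * (Dᵀ * U)))
            linarith
  nlinarith [tri, t1, t2, t3, t4]

/-- `‖𝒜_W·W − 𝒜_U·U‖_F ≤ 6 M α² ‖W − U‖_F`. -/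
lemma key6 (hM : sigmaMax H ≤ M) {W U : Matrix (Fin n) (Fin N) ℝ}
    (hW : sigmaMax W ≤ α) (hU : sigmaMax U ≤ α) :
    frobNorm (commA H W * W - commA H U * U) ≤ 6 * M * α ^ 2 * frobNorm (W - U) := by
  have hM0 : 0 ≤ M := (sigmaMax_nonneg H).trans hM
  have hα0 : 0 ≤ α := (sigmaMax_nonneg U).trans hU
  set D := W - U with hD
  have hf0 : 0 ≤ frobNorm D := frobNorm_nonneg D
  have hWt : sigmaMax Wᵀ ≤ α := by rw [sigmaMax_transpose]; exact hW
  have hUt : sigmaMax Uᵀ ≤ α := by rw [sigmaMax_transpose]; exact hU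
  have hDtf : frobNorm Dᵀ ≤ frobNorm D := le_of_eq (frobNorm_transpose D)
  have hHW : sigmaMax (H * W) ≤ M * α := bdS hM hW hM0
  have hHD : frobNorm (H * D) ≤ M * frobNorm D := bdL hM le_rfl hM0
  have t1 : frobNorm (H * (D * (Wᵀ * W))) ≤ M * (frobNorm D * (α * α)) :=
    bdL hM (bdR le_rfl (bdS hWt hW hα0) hf0) hM0
  have t2 : frobNorm (H * (U * (Dᵀ * W))) ≤ M * (α * (frobNorm D * α)) :=
    bdL hM (bdL hU (bdR hDtf hW hf0) hα0) hM0
  have t3 : frobNorm (H * (U * (Uᵀ * D))) ≤ M * (α * (α * frobNorm D)) :=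
    bdL hM (bdL hU (bdL hUt le_rfl hα0) hα0) hM0
  have t4 : frobNorm (D * (Wᵀ * (H * W))) ≤ frobNorm D * (α * (M * α)) :=
    bdR le_rfl (bdS hWt hHW hα0) hf0
  have t5 : frobNorm (U * (Dᵀ * (H * W))) ≤ α * (frobNorm D * (M * α)) :=
    bdL hU (bdR hDtf hHW hf0) hα0
  have t6 : frobNorm (U * (Uᵀ * (H * D))) ≤ α * (α * (M * frobNorm D)) :=
    bdL hU (bdL hUt hHD hα0) hα0
  have expand := commA_mul_diff_expand H W U
  rw [← hD] at expand
  rw [expand]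
  set A1 := H * (D * (Wᵀ * W))
  set A2 := H * (U * (Dᵀ * W))
  set A3 := H * (U * (Uᵀ * D))
  set A4 := D * (Wᵀ * (H * W))
  set A5 := U * (Dᵀ * (H * W))
  set A6 := U * (Uᵀ * (H * D))
  have tri : frobNorm (A1 + A2 + A3 - A4 - A5 - A6)
      ≤ frobNorm A1 + frobNorm A2 + frobNorm A3 + frobNorm A4 + frobNorm A5 + frobNorm A6 := by
    have h1 := frobNorm_sub_le (A1 + A2 + A3 - A4 - A5) A6
    have h2 := frobNorm_sub_le (A1 + A2 + A3 - A4) A5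
    have h3 := frobNorm_sub_le (A1 + A2 + A3) A4
    have h4 := frobNorm_add_le (A1 + A2) A3
    have h5 := frobNorm_add_le A1 A2
    linarith
  nlinarith [tri, t1, t2, t3, t4, t5, t6]

end KeyBounds

/-- Lower bound for the inner-iteration rotational gradient (equation (B.6)). -/
theorem inner_iteration_gradient_lower_bound
    {n N : ℕ} (H : Matrix (Fin n) (Fin n) ℝ) (hH : H.IsSymm)
    (M α : ℝ) (hM : sigmaMax H ≤ M)
    (U : Matrix (Fin n) (Fin N) ℝ) (hU : sigmaMax U ≤ α)
    (s : ℝ) (hs : 0 < s) (hsmall : 4 * s * α ^ 2 * M < 2)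
    (Ut : ℕ → Matrix (Fin n) (Fin N) ℝ)
    (h0 : Ut 0 = U)
    (hrec : ∀ k, Ut (k + 1) = (1 + (s / 2) • commA H (Ut k))⁻¹ * U) :
    ∀ p : ℕ,
      frobNorm (commA H (Ut p) * Ut p)
        ≥ (2 - 10 * s * α ^ 2 * M) / (2 - 4 * s * α ^ 2 * M) * frobNorm (commA H U * U) := by
  have hα0 : 0 ≤ α := (sigmaMax_nonneg U).trans hU
  have hM0 : 0 ≤ M := (sigmaMax_nonneg H).trans hM
  set g0 := frobNorm (commA H U * U) with hg0
  have hg0nn : 0 ≤ g0 := frobNorm_nonneg _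
  have hden : 0 < 2 - 4 * s * α ^ 2 * M := by linarith
  set B := s * g0 / (2 - 4 * s * α ^ 2 * M) with hB
  have hBnn : 0 ≤ B := by
    apply div_nonneg _ (le_of_lt hden); positivity
  have hskew : ∀ k, ((s / 2) • commA H (Ut k))ᵀ = -((s / 2) • commA H (Ut k)) :=
    fun k => smul_commA_skew hH (Ut k) (s / 2)
  have hsig : ∀ k, sigmaMax (Ut k) ≤ α := by
    intro k; induction k with
    | zero => rw [h0]; exact hU
    | succ k ih =>
      rw [hrec k]
      calc sigmaMax ((1 + (s / 2) • commA H (Ut k))⁻¹ * U) ≤ 1 * α :=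
            bdS (skew_inv_sigmaMax_le_one (hskew k)) hU zero_le_one
        _ = α := one_mul α
  have h4nn : (0:ℝ) ≤ 4 * M * α ^ 2 :=
    mul_nonneg (mul_nonneg (by norm_num) hM0) (sq_nonneg α)
  have h6nn : (0:ℝ) ≤ 6 * M * α ^ 2 :=
    mul_nonneg (mul_nonneg (by norm_num) hM0) (sq_nonneg α)
  have hdist : ∀ k, frobNorm (Ut k - U) ≤ B := by
    intro k; induction k with
    | zero => rw [h0, sub_self, frobNorm_zero]; exact hBnn
    | succ k ih =>
      set S := (s / 2) • commA H (Ut k) with hS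
      have hu : IsUnit (1 + S) := skew_isUnit (hskew k)
      have hdet : IsUnit (1 + S).det := (Matrix.isUnit_iff_isUnit_det _).mp hu
      have hid : Ut (k + 1) - U = -((1 + S)⁻¹ * (S * U)) := by
        rw [hrec k, ← hS]
        have h1 : (1 + S)⁻¹ * ((1 + S) * U) = U := by
          rw [← Matrix.mul_assoc, Matrix.nonsing_inv_mul _ hdet, Matrix.one_mul]
        calc (1 + S)⁻¹ * U - U = (1 + S)⁻¹ * U - (1 + S)⁻¹ * ((1 + S) * U) := by rw [h1]
          _ = (1 + S)⁻¹ * (U - (1 + S) * U) := by rw [Matrix.mul_sub]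
          _ = (1 + S)⁻¹ * (-(S * U)) := by
              congr 1
              rw [Matrix.add_mul, Matrix.one_mul]; abel
          _ = -((1 + S)⁻¹ * (S * U)) := by rw [Matrix.mul_neg]
      have hSU : frobNorm (S * U) = (s / 2) * frobNorm (commA H (Ut k) * U) := by
        rw [hS, Matrix.smul_mul, frobNorm_smul, abs_of_nonneg (by positivity)]
      have hcomm : frobNorm (commA H (Ut k) * U) ≤ g0 + 4 * M * α ^ 2 * frobNorm (Ut k - U) := by
        have hidd : commA H (Ut k) * U = commA H U * U + (commA H (Ut k) - commA H U) * U := by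
          rw [Matrix.sub_mul]; abel
        rw [hidd]
        have := key4 hM (hsig k) hU
        have htri := frobNorm_add_le (commA H U * U) ((commA H (Ut k) - commA H U) * U)
        rw [← hg0] at htri
        linarith
      have hfrob : frobNorm (Ut (k + 1) - U) ≤ 1 * ((s / 2) * frobNorm (commA H (Ut k) * U)) := by
        rw [hid, frobNorm_neg]
        exact bdL (skew_inv_sigmaMax_le_one (hskew k)) (le_of_eq hSU) zero_le_one
      have harith : (s / 2) * (g0 + 4 * M * α ^ 2 * B) = B := by
        rw [hB, div_eq_mul_inv]
        have e : (2 - 4 * s * α ^ 2 * M)⁻¹ * (2 - 4 * s * α ^ 2 * M) = 1 := inv_mul_cancel₀ hden.ne'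
        linear_combination (-(s * g0) / 2) * e
      have step : frobNorm (commA H (Ut k) * U) ≤ g0 + 4 * M * α ^ 2 * B := by
        have := mul_le_mul_of_nonneg_left ih h4nn
        linarith
      calc frobNorm (Ut (k + 1) - U) ≤ 1 * ((s / 2) * frobNorm (commA H (Ut k) * U)) := hfrob
        _ = (s / 2) * frobNorm (commA H (Ut k) * U) := one_mul _
        _ ≤ (s / 2) * (g0 + 4 * M * α ^ 2 * B) :=
            mul_le_mul_of_nonneg_left step (by positivity)
        _ = B := harith
  intro p
  have h6 := key6 hM (hsig p) hU
  have hlow := frobNorm_lower (commA H (Ut p) * Ut p) (commA H U * U)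
  have hswap : frobNorm (commA H U * U - commA H (Ut p) * Ut p)
      = frobNorm (commA H (Ut p) * Ut p - commA H U * U) := by
    rw [← frobNorm_neg (commA H (Ut p) * Ut p - commA H U * U), neg_sub]
  have hd6 : frobNorm (commA H (Ut p) * Ut p - commA H U * U) ≤ 6 * M * α ^ 2 * B :=
    h6.trans (mul_le_mul_of_nonneg_left (hdist p) h6nn)
  have hkey : (2 - 10 * s * α ^ 2 * M) / (2 - 4 * s * α ^ 2 * M) * g0
      = g0 - 6 * M * α ^ 2 * B := by
    rw [hB, div_eq_mul_inv, div_eq_mul_inv]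
    have e : (2 - 4 * s * α ^ 2 * M)⁻¹ * (2 - 4 * s * α ^ 2 * M) = 1 := inv_mul_cancel₀ hden.ne'
    linear_combination g0 * e
  rw [ge_iff_le, hkey]
  rw [hswap] at hlow
  linarith
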